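/- In R = MvPowerSeries (Fin m) ℚ, the power series Td′ · (Σ_{r=1}^m (−1)^r · r · ch_r) agrees in total degree m with (1/12) · e_1 · e_{m−1} + (m²/4) · e_m. -/

import Mathlib

open Finset

noncomputable section

/-- The element of `MvPowerSeries (Fin m) ℚ` obtained by substituting the variable `X j`
into a one-variable formal power series `f`. -/
def substAt {m : ℕ} (j : Fin m) (f : PowerSeries ℚ) : MvPowerSeries (Fin m) ℚ :=
  fun n => if n.support ⊆ {j} then PowerSeries.coeff (R := ℚ) (n j) f else 0

/-- The one-variable power series `exp (−X) = Σ_{n ≥ 0} (−X)^n / n!`. -/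
def expNeg : PowerSeries ℚ := PowerSeries.mk fun n => (-1) ^ n / n.factorial

/-- `ch m r = Σ_{S ⊆ Fin m, |S| = r} ∏_{j ∈ S} exp (−X j)`, the `r`-th Chern character
term of the exterior powers, written in Chern roots. -/
def ch (m : ℕ) (r : ℕ) : MvPowerSeries (Fin m) ℚ :=
  ∑ S ∈ Finset.powersetCard r (Finset.univ : Finset (Fin m)),
    ∏ j ∈ S, substAt j expNeg

/-- `esymm m k = Σ_{S ⊆ Fin m, |S| = k} ∏_{j ∈ S} X j`, the `k`-th elementary symmetric
polynomial of the variables, as a multivariate power series. -/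
def esymm (m : ℕ) (k : ℕ) : MvPowerSeries (Fin m) ℚ :=
  ∑ S ∈ Finset.powersetCard k (Finset.univ : Finset (Fin m)),
    ∏ j ∈ S, MvPowerSeries.X j

/-- The Todd class `Td = ∏_{j=1}^m φ(X_j)` written in Chern roots, where `φ` is the
Todd series `X/(1 − e^{−X})`. -/
def Td (m : ℕ) (φ : PowerSeries ℚ) : MvPowerSeries (Fin m) ℚ :=
  ∏ j : Fin m, substAt j φ

/-- `Td′ = Σ_{j=1}^m φ′(X_j) · ∏_{k ≠ j} φ(X_k)`, the class
`Td′(A) = ∂/∂t Td(A + t·Id)|_{t=0}` written in Chern roots. -/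
def Td' (m : ℕ) (φ : PowerSeries ℚ) : MvPowerSeries (Fin m) ℚ :=
  ∑ j : Fin m, substAt j (PowerSeries.derivative (R := ℚ) φ) *
    ∏ k ∈ Finset.univ.erase j, substAt k φ

/-- Two multivariate power series agree in total degree `≤ p`: their coefficients at every
multi-exponent of total degree `≤ p` coincide. -/
def AgreeUpTo (m p : ℕ) (F G : MvPowerSeries (Fin m) ℚ) : Prop :=
  ∀ n : Fin m →₀ ℕ, (∑ j, n j) ≤ p → MvPowerSeries.coeff (R := ℚ) n F = MvPowerSeries.coeff (R := ℚ) n G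

/-- Two multivariate power series agree in total degree `p`: their coefficients at every
multi-exponent of total degree `p` coincide. -/
def AgreeAt (m p : ℕ) (F G : MvPowerSeries (Fin m) ℚ) : Prop :=
  ∀ n : Fin m →₀ ℕ, (∑ j, n j) = p → MvPowerSeries.coeff (R := ℚ) n F = MvPowerSeries.coeff (R := ℚ) n G

lemma coeff_substAt {m : ℕ} (j : Fin m) (f : PowerSeries ℚ) (d : Fin m →₀ ℕ) :
    MvPowerSeries.coeff (R := ℚ) d (substAt j f) =
      if d.support ⊆ {j} then PowerSeries.coeff (R := ℚ) (d j) f else 0 := rfl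

lemma substAt_one {m : ℕ} (j : Fin m) : substAt j 1 = 1 := by
  ext d
  rw [coeff_substAt, MvPowerSeries.coeff_one, PowerSeries.coeff_one]
  by_cases hd : d = 0
  · subst hd; simp
  · simp only [hd, if_false]
    split_ifs with h1 h2
    · exfalso
      apply hd
      ext k
      by_cases hk : k = j
      · subst hk; exact h2
      · by_contra hne
        have : k ∈ d.support := Finsupp.mem_support_iff.2 hne
        have := h1 this
        simp at this
        exact hk this
    · rfl
    · rfl

lemma substAt_X {m : ℕ} (j : Fin m) : substAt j PowerSeries.X = MvPowerSeries.X j := by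
  ext d
  rw [coeff_substAt, MvPowerSeries.coeff_X, PowerSeries.coeff_X]
  by_cases hd : d = Finsupp.single j 1
  · subst hd
    simp [Finsupp.support_single_ne_zero j one_ne_zero]
  · simp only [hd, if_false]
    split_ifs with h1 h2
    · exfalso
      apply hd
      rw [Finsupp.support_subset_singleton] at h1
      rw [h1, h2]
    · rfl
    · rfl

lemma substAt_sub {m : ℕ} (j : Fin m) (f g : PowerSeries ℚ) :
    substAt j (f - g) = substAt j f - substAt j g := by
  ext d
  simp only [map_sub, coeff_substAt]
  split_ifs <;> simp

lemma substAt_mul {m : ℕ} (j : Fin m) (f g : PowerSeries ℚ) :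
    substAt j (f * g) = substAt j f * substAt j g := by
  ext d
  rw [coeff_substAt, MvPowerSeries.coeff_mul]
  by_cases hd : d.support ⊆ {j}
  · rw [if_pos hd, PowerSeries.coeff_mul]
    rw [Finsupp.support_subset_singleton] at hd
    refine Finset.sum_nbij' (i := fun p : ℕ × ℕ => ((Finsupp.single j p.1 : Fin m →₀ ℕ), (Finsupp.single j p.2 : Fin m →₀ ℕ)))
      (j := fun p : (Fin m →₀ ℕ) × (Fin m →₀ ℕ) => (p.1 j, p.2 j)) ?_ ?_ ?_ ?_ ?_
    · rintro ⟨a, b⟩ hab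
      rw [Finset.HasAntidiagonal.mem_antidiagonal] at hab ⊢
      rw [← Finsupp.single_add, hab, ← hd]
    · rintro ⟨p, q⟩ hpq
      rw [Finset.HasAntidiagonal.mem_antidiagonal] at hpq ⊢
      have := congrArg (fun x => x j) hpq
      simpa using this
    · rintro ⟨a, b⟩ _; simp
    · rintro ⟨p, q⟩ hpq
      rw [Finset.HasAntidiagonal.mem_antidiagonal] at hpq
      have hk0 : ∀ k, k ≠ j → p k = 0 ∧ q k = 0 := by
        intro k hk
        have h1 : p k + q k = d k := by rw [← hpq]; rfl
        have h2 : d k = 0 := by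
          conv_lhs => rw [hd]
          exact Finsupp.single_eq_of_ne hk
        constructor <;> omega
      have hp : p = Finsupp.single j (p j) := by
        ext k; by_cases hkj : k = j
        · subst hkj; simp
        · rw [Finsupp.single_eq_of_ne hkj]; exact (hk0 k hkj).1
      have hq : q = Finsupp.single j (q j) := by
        ext k; by_cases hkj : k = j
        · subst hkj; simp
        · rw [Finsupp.single_eq_of_ne hkj]; exact (hk0 k hkj).2
      exact Prod.ext hp.symm hq.symm
    · rintro ⟨a, b⟩ _
      simp only [coeff_substAt]
      rw [if_pos (Finsupp.support_single_subset), if_pos (Finsupp.support_single_subset),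
        Finsupp.single_eq_same, Finsupp.single_eq_same]
  · rw [if_neg hd]
    symm
    apply Finset.sum_eq_zero
    rintro ⟨p, q⟩ hpq
    rw [Finset.HasAntidiagonal.mem_antidiagonal] at hpq
    simp only [coeff_substAt]
    by_cases hp : p.support ⊆ {j}
    · by_cases hq : q.support ⊆ {j}
      · exfalso
        apply hd
        rw [← hpq]
        exact (Finsupp.support_add).trans (by rw [Finset.union_subset_iff]; exact ⟨hp, hq⟩)
      · rw [if_neg hq, mul_zero]
    · rw [if_neg hp, zero_mul]

lemma coeff_prod_substAt {m : ℕ} (f : Fin m → PowerSeries ℚ) (n : Fin m →₀ ℕ) :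
    MvPowerSeries.coeff (R := ℚ) n (∏ k : Fin m, substAt k (f k)) =
      ∏ k : Fin m, PowerSeries.coeff (R := ℚ) (n k) (f k) := by
  classical
  rw [MvPowerSeries.coeff_prod]
  set l₀ : Fin m →₀ (Fin m →₀ ℕ) :=
    Finsupp.equivFunOnFinite.symm (fun k => Finsupp.single k (n k)) with hl₀
  have hl₀app : ∀ k, l₀ k = Finsupp.single k (n k) := fun k => rfl
  rw [Finset.sum_eq_single l₀]
  · apply Finset.prod_congr rfl
    intro k _
    rw [hl₀app, coeff_substAt, if_pos Finsupp.support_single_subset, Finsupp.single_eq_same]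
  · intro l hl hne
    rw [Finset.mem_finsuppAntidiag] at hl
    obtain ⟨hsum, -⟩ := hl
    by_cases hs : ∀ k, (l k).support ⊆ {k}
    · exfalso
      apply hne
      ext k k'
      rw [hl₀app]
      have hlk : l k = Finsupp.single k (l k k) := Finsupp.support_subset_singleton.1 (hs k)
      have hnk : n k = l k k := by
        rw [← hsum]
        rw [Finset.sum_apply']
        rw [Finset.sum_eq_single k]
        · intro b _ hbk
          rw [Finsupp.support_subset_singleton.1 (hs b)]
          exact Finsupp.single_eq_of_ne hbk.symm
        · intro h; exact absurd (Finset.mem_univ k) h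
      rw [hnk, ← hlk]
    · push_neg at hs
      obtain ⟨k, hk⟩ := hs
      apply Finset.prod_eq_zero (Finset.mem_univ k)
      rw [coeff_substAt, if_neg hk]
  · intro h
    exfalso
    apply h
    rw [Finset.mem_finsuppAntidiag]
    constructor
    · ext k'
      rw [Finset.sum_apply']
      rw [Finset.sum_eq_single k']
      · rw [hl₀app, Finsupp.single_eq_same]
      · intro b _ hb; rw [hl₀app]; exact Finsupp.single_eq_of_ne hb.symm
      · intro h; exact absurd (Finset.mem_univ k') h
    · intro k _; exact Finset.mem_univ k

lemma sum_weighted {m : ℕ} (E : Fin m → MvPowerSeries (Fin m) ℚ) :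
    ∑ r ∈ Finset.Icc 1 m, (-1 : MvPowerSeries (Fin m) ℚ) ^ r * (r : MvPowerSeries (Fin m) ℚ) *
      (∑ S ∈ Finset.powersetCard r (Finset.univ : Finset (Fin m)), ∏ j ∈ S, E j)
    = -∑ j : Fin m, E j * ∏ k ∈ Finset.univ.erase j, (1 - E k) := by
  classical
  have h0 : ∑ r ∈ Finset.Icc 1 m, (-1 : MvPowerSeries (Fin m) ℚ) ^ r *
        (r : MvPowerSeries (Fin m) ℚ) *
      (∑ S ∈ Finset.powersetCard r (Finset.univ : Finset (Fin m)), ∏ j ∈ S, E j)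
    = ∑ r ∈ Finset.range (m+1), (-1 : MvPowerSeries (Fin m) ℚ) ^ r *
        (r : MvPowerSeries (Fin m) ℚ) *
      (∑ S ∈ Finset.powersetCard r (Finset.univ : Finset (Fin m)), ∏ j ∈ S, E j) := by
    have : Finset.range (m+1) = insert 0 (Finset.Icc 1 m) := by
      ext r
      simp only [Finset.mem_range, Finset.mem_insert, Finset.mem_Icc]
      omega
    rw [this, Finset.sum_insert (by simp)]
    simp
  rw [h0]
  have h1 : ∀ r ∈ Finset.range (m+1),
      (-1 : MvPowerSeries (Fin m) ℚ) ^ r * (r : MvPowerSeries (Fin m) ℚ) *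
        (∑ S ∈ Finset.powersetCard r (Finset.univ : Finset (Fin m)), ∏ j ∈ S, E j)
      = ∑ S ∈ (Finset.univ : Finset (Fin m)).powerset.filter (fun S => S.card = r),
          ∑ j ∈ S, (-1 : MvPowerSeries (Fin m) ℚ) ^ S.card * ∏ k ∈ S, E k := by
    intro r _
    rw [Finset.mul_sum, ← Finset.powersetCard_eq_filter]
    apply Finset.sum_congr rfl
    intro S hS
    rw [Finset.mem_powersetCard] at hS
    rw [Finset.sum_const, ← hS.2, nsmul_eq_mul]
    ring
  rw [Finset.sum_congr rfl h1]
  rw [Finset.sum_fiberwise_of_maps_to (fun S hS => by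
    rw [Finset.mem_range]
    rw [Finset.mem_powerset] at hS
    exact Nat.lt_succ_of_le (le_trans (Finset.card_le_card hS) (by simp)))]
  have h2 : ∀ S ∈ (Finset.univ : Finset (Fin m)).powerset,
      (∑ j ∈ S, (-1 : MvPowerSeries (Fin m) ℚ) ^ S.card * ∏ k ∈ S, E k)
      = ∑ j : Fin m, if j ∈ S then (-1 : MvPowerSeries (Fin m) ℚ) ^ S.card * ∏ k ∈ S, E k
          else 0 := by
    intro S _
    rw [Finset.sum_ite_mem, Finset.univ_inter]
  rw [Finset.sum_congr rfl h2, Finset.sum_comm, ← Finset.sum_neg_distrib]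
  apply Finset.sum_congr rfl
  intro j _
  have huniv : (Finset.univ : Finset (Fin m)) = insert j (Finset.univ.erase j) :=
    (Finset.insert_erase (Finset.mem_univ j)).symm
  have hexp : ∏ k ∈ Finset.univ.erase j, (1 - E k)
      = ∑ t ∈ (Finset.univ.erase j).powerset,
          (-1 : MvPowerSeries (Fin m) ℚ) ^ t.card * ∏ k ∈ t, E k := by
    have : ∀ k ∈ Finset.univ.erase j, (1 - E k) = -E k + 1 := by
      intro k _; ring
    rw [Finset.prod_congr rfl this, Finset.prod_add]
    apply Finset.sum_congr rfl
    intro t _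
    rw [Finset.prod_const_one, mul_one]
    rw [show (fun k => -E k) = fun k => (-1 : MvPowerSeries (Fin m) ℚ) * E k by funext k; ring]
    rw [Finset.prod_mul_distrib, Finset.prod_const]
  rw [hexp, Finset.mul_sum, ← Finset.sum_neg_distrib]
  conv_lhs => rw [huniv]
  rw [Finset.sum_powerset_insert (Finset.notMem_erase j _)]
  have hz : ∀ t ∈ (Finset.univ.erase j).powerset,
      (if j ∈ t then (-1 : MvPowerSeries (Fin m) ℚ) ^ t.card * ∏ k ∈ t, E k else 0) = 0 := by
    intro t ht
    rw [Finset.mem_powerset] at ht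
    rw [if_neg (fun hj => Finset.notMem_erase j _ (ht hj))]
  rw [Finset.sum_congr rfl hz, Finset.sum_const, smul_zero, zero_add]
  have hterm : ∀ t ∈ (Finset.univ.erase j).powerset,
      (if j ∈ insert j t then
        (-1 : MvPowerSeries (Fin m) ℚ) ^ (insert j t).card * ∏ k ∈ insert j t, E k else 0)
      = -(E j * ((-1 : MvPowerSeries (Fin m) ℚ) ^ t.card * ∏ k ∈ t, E k)) := by
    intro t ht
    rw [Finset.mem_powerset] at ht
    have hjt : j ∉ t := fun hj => Finset.notMem_erase j _ (ht hj)
    rw [if_pos (Finset.mem_insert_self j t), Finset.card_insert_of_notMem hjt,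
      Finset.prod_insert hjt, pow_succ]
    ring
  rw [Finset.sum_congr rfl hterm]

/-- auxiliary one-variable series assigned to position `k` for the pair `(i,j)` -/
def AA (m : ℕ) (φ : PowerSeries ℚ) (i j k : Fin m) : PowerSeries ℚ :=
  if i = j then (if k = j then PowerSeries.derivative (R := ℚ) φ * expNeg else PowerSeries.X)
  else if k = i then PowerSeries.derivative (R := ℚ) φ * (1 - expNeg)
  else if k = j then expNeg * φ else PowerSeries.X

lemma lhs_eq (m : ℕ) (φ : PowerSeries ℚ) (hφ : φ * (1 - expNeg) = PowerSeries.X) :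
    Td' m φ * ∑ r ∈ Finset.Icc 1 m,
        (-1 : MvPowerSeries (Fin m) ℚ) ^ r * (r : MvPowerSeries (Fin m) ℚ) * ch m r
    = -∑ i : Fin m, ∑ j : Fin m, ∏ k : Fin m, substAt k (AA m φ i j k) := by
  classical
  have hsub : ∀ k : Fin m, substAt k φ * (1 - substAt k expNeg) = MvPowerSeries.X k := by
    intro k
    rw [show (1 : MvPowerSeries (Fin m) ℚ) - substAt k expNeg = substAt k (1 - expNeg) by
      rw [substAt_sub, substAt_one]]
    rw [← substAt_mul, hφ, substAt_X]
  simp only [ch]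
  rw [sum_weighted, Td', mul_neg, Finset.sum_mul_sum, neg_inj]
  apply Finset.sum_congr rfl
  intro i _
  apply Finset.sum_congr rfl
  intro j _
  by_cases hij : i = j
  · subst hij
    have hpeel : ∏ k : Fin m, substAt k (AA m φ i i k)
        = substAt i (AA m φ i i i) * ∏ k ∈ Finset.univ.erase i, substAt k (AA m φ i i k) :=
      (Finset.mul_prod_erase Finset.univ _ (Finset.mem_univ i)).symm
    rw [hpeel]
    have h1 : ∀ k ∈ Finset.univ.erase i, substAt k (AA m φ i i k) = MvPowerSeries.X k := by
      intro k hk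
      have : k ≠ i := Finset.ne_of_mem_erase hk
      rw [show AA m φ i i k = PowerSeries.X by simp [AA, this]]; rw [substAt_X]
    rw [Finset.prod_congr rfl h1]
    rw [show AA m φ i i i = PowerSeries.derivative (R := ℚ) φ * expNeg by simp [AA]]
    rw [substAt_mul]
    have h2 : ∏ k ∈ Finset.univ.erase i, MvPowerSeries.X k (R := ℚ)
        = ∏ k ∈ Finset.univ.erase i, (substAt k φ * (1 - substAt k expNeg)) := by
      apply Finset.prod_congr rfl
      intro k _
      rw [hsub k]
    rw [h2, Finset.prod_mul_distrib]
    ring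
  · have hji : j ∈ Finset.univ.erase i := Finset.mem_erase.2 ⟨fun h => hij h.symm, Finset.mem_univ j⟩
    have hij' : i ∈ Finset.univ.erase j := Finset.mem_erase.2 ⟨hij, Finset.mem_univ i⟩
    have hpeel : ∏ k : Fin m, substAt k (AA m φ i j k)
        = substAt i (AA m φ i j i) * (substAt j (AA m φ i j j) *
            ∏ k ∈ (Finset.univ.erase i).erase j, substAt k (AA m φ i j k)) := by
      rw [← Finset.mul_prod_erase Finset.univ _ (Finset.mem_univ i),
        ← Finset.mul_prod_erase _ _ hji]
    rw [hpeel]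
    have h1 : ∀ k ∈ (Finset.univ.erase i).erase j, substAt k (AA m φ i j k) = MvPowerSeries.X k := by
      intro k hk
      have hk1 : k ≠ j := Finset.ne_of_mem_erase hk
      have hk2 : k ≠ i := Finset.ne_of_mem_erase (Finset.mem_of_mem_erase hk)
      simp only [AA, if_neg hij, if_neg hk2, if_neg hk1]; rw [substAt_X]
    rw [Finset.prod_congr rfl h1]
    rw [show AA m φ i j i = PowerSeries.derivative (R := ℚ) φ * (1 - expNeg) by
      simp [AA, hij]]
    rw [show AA m φ i j j = expNeg * φ by simp [AA, hij, Ne.symm hij]]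
    rw [substAt_mul, substAt_mul]
    rw [show substAt i (1 - expNeg) = 1 - substAt i expNeg by rw [substAt_sub, substAt_one]]
    -- expand the X-product into φ·(1-expNeg) factors
    have h2 : ∏ k ∈ (Finset.univ.erase i).erase j, MvPowerSeries.X k (R := ℚ)
        = ∏ k ∈ (Finset.univ.erase i).erase j, (substAt k φ * (1 - substAt k expNeg)) := by
      apply Finset.prod_congr rfl
      intro k _
      rw [hsub k]
    rw [h2, Finset.prod_mul_distrib]
    -- split the LHS products
    rw [← Finset.mul_prod_erase _ (fun k => 1 - substAt k expNeg) hij',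
      show (Finset.univ.erase j).erase i = (Finset.univ.erase i).erase j from
        Finset.erase_right_comm,
      ← Finset.mul_prod_erase _ (fun k => substAt k φ) hji]
    ring

def BB (m : ℕ) (i j k : Fin m) : PowerSeries ℚ :=
  if i = j then PowerSeries.X else if k = i then PowerSeries.X ^ 2
  else if k = j then 1 else PowerSeries.X

lemma esymm_top (m : ℕ) : esymm m m = ∏ k : Fin m, substAt k PowerSeries.X := by
  have : Finset.powersetCard m (Finset.univ : Finset (Fin m)) = {Finset.univ} := by
    have h := Finset.powersetCard_self (Finset.univ : Finset (Fin m))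
    rwa [Finset.card_univ, Fintype.card_fin] at h
  rw [esymm, this, Finset.sum_singleton]
  apply Finset.prod_congr rfl
  intro k _
  rw [substAt_X]

lemma esymm_one (m : ℕ) : esymm m 1 = ∑ i : Fin m, MvPowerSeries.X i := by
  rw [esymm, Finset.powersetCard_one, Finset.sum_map]
  apply Finset.sum_congr rfl
  intro i _
  simp

lemma esymm_pred (m : ℕ) (hm : 0 < m) :
    esymm m (m - 1) = ∑ j : Fin m, ∏ k ∈ Finset.univ.erase j, MvPowerSeries.X k (R := ℚ) := by
  classical
  have himg : Finset.powersetCard (m-1) (Finset.univ : Finset (Fin m))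
      = Finset.image (fun j => Finset.univ.erase j) Finset.univ := by
    ext S
    simp only [Finset.mem_powersetCard, Finset.mem_image]
    constructor
    · rintro ⟨hsub, hcard⟩
      have hcomp : (Finset.univ \ S).card = 1 := by
        rw [Finset.card_sdiff_of_subset hsub, Finset.card_univ, Fintype.card_fin, hcard]
        omega
      obtain ⟨j, hj⟩ := Finset.card_eq_one.1 hcomp
      refine ⟨j, Finset.mem_univ j, ?_⟩
      rw [Finset.erase_eq, ← hj, Finset.sdiff_sdiff_self_left, Finset.univ_inter]
    · rintro ⟨j, -, rfl⟩
      exact ⟨Finset.subset_univ _, by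
        rw [Finset.card_erase_of_mem (Finset.mem_univ j), Finset.card_univ, Fintype.card_fin]⟩
  rw [esymm, himg, Finset.sum_image]
  intro x _ y _ hxy
  by_contra hne
  have : x ∈ Finset.univ.erase y := Finset.mem_erase.2 ⟨hne, Finset.mem_univ x⟩
  rw [← show Finset.univ.erase x = Finset.univ.erase y from hxy] at this
  exact (Finset.mem_erase.1 this).1 rfl

lemma rhs_eq (m : ℕ) (hm : 0 < m) :
    esymm m 1 * esymm m (m - 1) = ∑ i : Fin m, ∑ j : Fin m, ∏ k : Fin m, substAt k (BB m i j k) := by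
  classical
  rw [esymm_one, esymm_pred m hm, Finset.sum_mul_sum]
  apply Finset.sum_congr rfl
  intro i _
  apply Finset.sum_congr rfl
  intro j _
  by_cases hij : i = j
  · subst hij
    have h1 : ∀ k ∈ Finset.univ.erase i, MvPowerSeries.X k (R := ℚ) = substAt k (BB m i i k) := by
      intro k hk
      rw [show BB m i i k = PowerSeries.X by simp [BB], substAt_X]
    rw [Finset.prod_congr rfl h1,
      show MvPowerSeries.X i (R := ℚ) = substAt i (BB m i i i) by
        rw [show BB m i i i = PowerSeries.X by simp [BB], substAt_X],
      ]
    exact Finset.mul_prod_erase Finset.univ (fun k => substAt k (BB m i i k)) (Finset.mem_univ i)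
  · have hij' : i ∈ Finset.univ.erase j := Finset.mem_erase.2 ⟨hij, Finset.mem_univ i⟩
    have hji : j ∈ Finset.univ.erase i := Finset.mem_erase.2 ⟨fun h => hij h.symm, Finset.mem_univ j⟩
    rw [← Finset.mul_prod_erase _ _ hij']
    have h1 : ∀ k ∈ (Finset.univ.erase j).erase i,
        MvPowerSeries.X k (R := ℚ) = substAt k (BB m i j k) := by
      intro k hk
      have hk1 : k ≠ i := Finset.ne_of_mem_erase hk
      have hk2 : k ≠ j := Finset.ne_of_mem_erase (Finset.mem_of_mem_erase hk)
      rw [show BB m i j k = PowerSeries.X by simp [BB, hij, hk1, hk2], substAt_X]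
    rw [Finset.prod_congr rfl h1]
    have hpeel : ∏ k : Fin m, substAt k (BB m i j k)
        = substAt i (BB m i j i) * (substAt j (BB m i j j) *
            ∏ k ∈ (Finset.univ.erase i).erase j, substAt k (BB m i j k)) := by
      rw [← Finset.mul_prod_erase Finset.univ _ (Finset.mem_univ i),
        ← Finset.mul_prod_erase _ _ hji]
    rw [hpeel,
      show BB m i j i = PowerSeries.X ^ 2 by simp [BB, hij],
      show BB m i j j = 1 by simp [BB, hij, Ne.symm hij],
      substAt_one,
      show (Finset.univ.erase i).erase j = (Finset.univ.erase j).erase i from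
        Finset.erase_right_comm,
      show substAt i (PowerSeries.X ^ 2) = MvPowerSeries.X i ^ 2 by
        rw [pow_two, pow_two, substAt_mul, substAt_X]]
    ring

section coeffs
variable (φ : PowerSeries ℚ) (hφ : φ * (1 - expNeg) = PowerSeries.X)

lemma coeff_expNeg (n : ℕ) : PowerSeries.coeff (R := ℚ) n expNeg = (-1) ^ n / n.factorial := by
  simp [expNeg]

lemma coeff_oneSub (n : ℕ) : PowerSeries.coeff (R := ℚ) n (1 - expNeg)
    = (if n = 0 then 1 else 0) - (-1) ^ n / n.factorial := by
  rw [map_sub, PowerSeries.coeff_one, coeff_expNeg]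

include hφ

lemma phi0 : PowerSeries.constantCoeff (R := ℚ) φ = 1 := by
  have h := congrArg (PowerSeries.coeff (R := ℚ) 1) hφ
  rw [PowerSeries.coeff_mul, Finset.Nat.sum_antidiagonal_eq_sum_range_succ_mk] at h
  simp only [Finset.sum_range_succ, Finset.sum_range_zero, coeff_oneSub,
    PowerSeries.coeff_X] at h
  norm_num at h
  exact h

lemma phi0' : PowerSeries.coeff (R := ℚ) 0 φ = 1 := by
  rw [PowerSeries.coeff_zero_eq_constantCoeff]
  exact phi0 φ hφ

lemma phi1 : PowerSeries.coeff (R := ℚ) 1 φ = 1/2 := by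
  have h := congrArg (PowerSeries.coeff (R := ℚ) 2) hφ
  rw [PowerSeries.coeff_mul, Finset.Nat.sum_antidiagonal_eq_sum_range_succ_mk] at h
  simp only [Finset.sum_range_succ, Finset.sum_range_zero, coeff_oneSub,
    PowerSeries.coeff_X] at h
  norm_num [Nat.factorial] at h
  have h0 := phi0 φ hφ
  rw [h0] at h
  linarith

lemma phi2 : PowerSeries.coeff (R := ℚ) 2 φ = 1/12 := by
  have h := congrArg (PowerSeries.coeff (R := ℚ) 3) hφ
  rw [PowerSeries.coeff_mul, Finset.Nat.sum_antidiagonal_eq_sum_range_succ_mk] at h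
  simp only [Finset.sum_range_succ, Finset.sum_range_zero, coeff_oneSub,
    PowerSeries.coeff_X] at h
  norm_num [Nat.factorial] at h
  have h0 := phi0 φ hφ
  have h1 := phi1 φ hφ
  rw [h0, h1] at h
  linarith

end coeffs

section vals
variable (φ : PowerSeries ℚ) (hφ : φ * (1 - expNeg) = PowerSeries.X)
include hφ

lemma dphi0 : PowerSeries.coeff (R := ℚ) 0 (PowerSeries.derivative (R := ℚ) φ) = 1/2 := by
  rw [PowerSeries.coeff_derivative, phi1 φ hφ]; norm_num

lemma dphi1 : PowerSeries.coeff (R := ℚ) 1 (PowerSeries.derivative (R := ℚ) φ) = 1/6 := by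
  rw [PowerSeries.coeff_derivative, phi2 φ hφ]; norm_num

lemma uval1 : PowerSeries.coeff (R := ℚ) 1 (PowerSeries.derivative (R := ℚ) φ * expNeg) = -(1/3) := by
  rw [PowerSeries.coeff_mul, Finset.Nat.sum_antidiagonal_eq_sum_range_succ_mk]
  simp only [Finset.sum_range_succ, Finset.sum_range_zero, coeff_expNeg]
  rw [show (1:ℕ) - 0 = 1 from rfl, show (1:ℕ) - 1 = 0 from rfl]
  rw [dphi0 φ hφ]
  rw [show PowerSeries.coeff (R := ℚ) 1 (PowerSeries.derivative (R := ℚ) φ)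
    = 1/6 from dphi1 φ hφ]
  norm_num [Nat.factorial]

lemma gval (n : ℕ) (hn : n ≤ 2) :
    PowerSeries.coeff (R := ℚ) n (PowerSeries.derivative (R := ℚ) φ * (1 - expNeg))
    = if n = 0 then 0 else if n = 1 then 1/2 else -(1/12) := by
  interval_cases n
  · rw [PowerSeries.coeff_mul, Finset.Nat.sum_antidiagonal_eq_sum_range_succ_mk]
    simp [coeff_oneSub]
  · rw [PowerSeries.coeff_mul, Finset.Nat.sum_antidiagonal_eq_sum_range_succ_mk]
    simp only [Finset.sum_range_succ, Finset.sum_range_zero, coeff_oneSub]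
    rw [show (1:ℕ) - 0 = 1 from rfl, show (1:ℕ) - 1 = 0 from rfl]
    rw [dphi0 φ hφ]
    norm_num [Nat.factorial]
  · rw [PowerSeries.coeff_mul, Finset.Nat.sum_antidiagonal_eq_sum_range_succ_mk]
    simp only [Finset.sum_range_succ, Finset.sum_range_zero, coeff_oneSub]
    rw [show (2:ℕ) - 0 = 2 from rfl, show (2:ℕ) - 1 = 1 from rfl, show (2:ℕ) - 2 = 0 from rfl]
    rw [dphi0 φ hφ, dphi1 φ hφ]
    norm_num [Nat.factorial]

lemma hval (n : ℕ) (hn : n ≤ 2) :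
    PowerSeries.coeff (R := ℚ) n (expNeg * φ)
    = if n = 0 then 1 else if n = 1 then -(1/2) else 1/12 := by
  interval_cases n
  · rw [PowerSeries.coeff_mul, Finset.Nat.sum_antidiagonal_eq_sum_range_succ_mk]
    simp only [Finset.sum_range_succ, Finset.sum_range_zero, coeff_expNeg]
    rw [phi0' φ hφ]
    norm_num
  · rw [PowerSeries.coeff_mul, Finset.Nat.sum_antidiagonal_eq_sum_range_succ_mk]
    simp only [Finset.sum_range_succ, Finset.sum_range_zero, coeff_expNeg]
    rw [show (1:ℕ) - 0 = 1 from rfl, show (1:ℕ) - 1 = 0 from rfl]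
    rw [phi0' φ hφ, phi1 φ hφ]
    norm_num [Nat.factorial]
  · rw [PowerSeries.coeff_mul, Finset.Nat.sum_antidiagonal_eq_sum_range_succ_mk]
    simp only [Finset.sum_range_succ, Finset.sum_range_zero, coeff_expNeg]
    rw [show (2:ℕ) - 0 = 2 from rfl, show (2:ℕ) - 1 = 1 from rfl, show (2:ℕ) - 2 = 0 from rfl]
    rw [phi0' φ hφ, phi1 φ hφ, phi2 φ hφ]
    norm_num [Nat.factorial]

end vals

lemma key (m : ℕ) (hm : 0 < m) (φ : PowerSeries ℚ) (hφ : φ * (1 - expNeg) = PowerSeries.X)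
    (n : Fin m →₀ ℕ) (hn : ∑ l, n l = m) (i j : Fin m) :
    -(∏ k : Fin m, PowerSeries.coeff (R := ℚ) (n k) (AA m φ i j k))
    = (1/12 : ℚ) * ∏ k : Fin m, PowerSeries.coeff (R := ℚ) (n k) (BB m i j k)
      + (1/4 : ℚ) * ∏ k : Fin m, PowerSeries.coeff (R := ℚ) (n k) PowerSeries.X := by
  classical
  by_cases hij : i = j
  · subst hij
    have hA : ∏ k : Fin m, PowerSeries.coeff (R := ℚ) (n k) (AA m φ i i k)
        = PowerSeries.coeff (R := ℚ) (n i) (PowerSeries.derivative (R := ℚ) φ * expNeg) *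
          ∏ k ∈ Finset.univ.erase i, (if n k = 1 then (1:ℚ) else 0) := by
      rw [← Finset.mul_prod_erase Finset.univ
        (fun k => PowerSeries.coeff (R := ℚ) (n k) (AA m φ i i k)) (Finset.mem_univ i)]
      congr 1
      · simp [AA]
      · apply Finset.prod_congr rfl
        intro k hk
        have hki : k ≠ i := Finset.ne_of_mem_erase hk
        rw [show AA m φ i i k = PowerSeries.X by simp [AA, hki], PowerSeries.coeff_X]
    have hB : ∀ k : Fin m, PowerSeries.coeff (R := ℚ) (n k) (BB m i i k)
        = if n k = 1 then (1:ℚ) else 0 := by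
      intro k
      rw [show BB m i i k = PowerSeries.X by simp [BB], PowerSeries.coeff_X]
    have hX : ∀ k : Fin m, PowerSeries.coeff (R := ℚ) (n k) (PowerSeries.X : PowerSeries ℚ)
        = if n k = 1 then (1:ℚ) else 0 := fun k => PowerSeries.coeff_X _
    rw [hA, Finset.prod_congr rfl (fun k _ => hB k), Finset.prod_congr rfl (fun k _ => hX k)]
    by_cases hall : ∀ k ∈ Finset.univ.erase i, n k = 1
    · have hsum : ∑ l ∈ Finset.univ.erase i, n l = m - 1 := by
        rw [Finset.sum_congr rfl hall, Finset.sum_const, smul_eq_mul, mul_one,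
          Finset.card_erase_of_mem (Finset.mem_univ i), Finset.card_univ, Fintype.card_fin]
      have hni : n i = 1 := by
        have := Finset.add_sum_erase Finset.univ n (Finset.mem_univ i)
        rw [hsum] at this
        rw [← this] at hn
        omega
      have h1 : ∏ k ∈ Finset.univ.erase i, (if n k = 1 then (1:ℚ) else 0) = 1 :=
        Finset.prod_eq_one (fun k hk => by rw [if_pos (hall k hk)])
      have h2 : ∏ k : Fin m, (if n k = 1 then (1:ℚ) else 0) = 1 := by
        apply Finset.prod_eq_one
        intro k hk
        by_cases hki : k = i
        · subst hki; rw [if_pos hni]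
        · rw [if_pos (hall k (Finset.mem_erase.2 ⟨hki, hk⟩))]
      rw [h1, h2, hni, uval1 φ hφ]
      norm_num
    · push_neg at hall
      obtain ⟨k0, hk0, hk0n⟩ := hall
      have h1 : ∏ k ∈ Finset.univ.erase i, (if n k = 1 then (1:ℚ) else 0) = 0 :=
        Finset.prod_eq_zero hk0 (by rw [if_neg hk0n])
      have h2 : ∏ k : Fin m, (if n k = 1 then (1:ℚ) else 0) = 0 :=
        Finset.prod_eq_zero (Finset.mem_univ k0) (by rw [if_neg hk0n])
      rw [h1, h2]
      ring
  · have hji : j ∈ Finset.univ.erase i :=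
      Finset.mem_erase.2 ⟨fun h => hij h.symm, Finset.mem_univ j⟩
    have hm2 : 2 ≤ m := by
      by_contra h
      push_neg at h
      apply hij
      have : m = 1 := by omega
      subst this
      exact Subsingleton.elim i j
    have peel : ∀ g : Fin m → ℚ, ∏ k : Fin m, g k
        = g i * (g j * ∏ k ∈ (Finset.univ.erase i).erase j, g k) := by
      intro g
      rw [← Finset.mul_prod_erase Finset.univ g (Finset.mem_univ i),
        ← Finset.mul_prod_erase _ g hji]
    have hcard : ((Finset.univ.erase i).erase j).card = m - 2 := by
      rw [Finset.card_erase_of_mem hji, Finset.card_erase_of_mem (Finset.mem_univ i),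
        Finset.card_univ, Fintype.card_fin]
      omega
    have hAA : ∀ k ∈ (Finset.univ.erase i).erase j,
        PowerSeries.coeff (R := ℚ) (n k) (AA m φ i j k) = (if n k = 1 then (1:ℚ) else 0) := by
      intro k hk
      have hk1 : k ≠ j := Finset.ne_of_mem_erase hk
      have hk2 : k ≠ i := Finset.ne_of_mem_erase (Finset.mem_of_mem_erase hk)
      rw [show AA m φ i j k = PowerSeries.X by simp [AA, hij, hk1, hk2], PowerSeries.coeff_X]
    have hBB : ∀ k ∈ (Finset.univ.erase i).erase j,
        PowerSeries.coeff (R := ℚ) (n k) (BB m i j k) = (if n k = 1 then (1:ℚ) else 0) := by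
      intro k hk
      have hk1 : k ≠ j := Finset.ne_of_mem_erase hk
      have hk2 : k ≠ i := Finset.ne_of_mem_erase (Finset.mem_of_mem_erase hk)
      rw [show BB m i j k = PowerSeries.X by simp [BB, hij, hk1, hk2], PowerSeries.coeff_X]
    rw [peel (fun k => PowerSeries.coeff (R := ℚ) (n k) (AA m φ i j k)),
      peel (fun k => PowerSeries.coeff (R := ℚ) (n k) (BB m i j k)),
      peel (fun k => PowerSeries.coeff (R := ℚ) (n k) PowerSeries.X)]
    rw [Finset.prod_congr rfl hAA, Finset.prod_congr rfl hBB,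
      Finset.prod_congr rfl (fun k (_ : k ∈ (Finset.univ.erase i).erase j) =>
        PowerSeries.coeff_X (n k) (R := ℚ))]
    rw [show AA m φ i j i = PowerSeries.derivative (R := ℚ) φ * (1 - expNeg) by
        simp [AA, hij],
      show AA m φ i j j = expNeg * φ by simp [AA, hij, Ne.symm hij],
      show BB m i j i = PowerSeries.X ^ 2 by simp [BB, hij],
      show BB m i j j = 1 by simp [BB, hij, Ne.symm hij]]
    by_cases hall : ∀ k ∈ (Finset.univ.erase i).erase j, n k = 1
    · have hprod : ∏ k ∈ (Finset.univ.erase i).erase j, (if n k = 1 then (1:ℚ) else 0) = 1 :=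
        Finset.prod_eq_one (fun k hk => by rw [if_pos (hall k hk)])
      have hsum2 : n i + n j = 2 := by
        have e1 := Finset.add_sum_erase Finset.univ n (Finset.mem_univ i)
        have e2 := Finset.add_sum_erase (Finset.univ.erase i) n hji
        have e3 : ∑ l ∈ (Finset.univ.erase i).erase j, n l = m - 2 := by
          rw [Finset.sum_congr rfl hall, Finset.sum_const, smul_eq_mul, mul_one, hcard]
        rw [e3] at e2
        rw [← e2] at e1
        rw [← e1] at hn
        omega
      rw [hprod]
      have hni2 : n i ≤ 2 := by omega
      rw [gval φ hφ (n i) hni2, hval φ hφ (n j) (by omega)]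
      rw [PowerSeries.coeff_X_pow, PowerSeries.coeff_one, PowerSeries.coeff_X,
        PowerSeries.coeff_X]
      interval_cases h : n i
      · have hj2 : n j = 2 := by omega
        rw [hj2]; norm_num
      · have hj1 : n j = 1 := by omega
        rw [hj1]; norm_num
      · have hj0 : n j = 0 := by omega
        rw [hj0]; norm_num
    · push_neg at hall
      obtain ⟨k0, hk0, hk0n⟩ := hall
      have hprod : ∏ k ∈ (Finset.univ.erase i).erase j, (if n k = 1 then (1:ℚ) else 0) = 0 :=
        Finset.prod_eq_zero hk0 (by rw [if_neg hk0n])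
      rw [hprod]
      ring

/-- `Td′ · (Σ_{r=1}^m (−1)^r · r · ch_r)` agrees in total degree `m` with
`(1/12) · e_1 · e_{m−1} + (m²/4) · e_m`.  (The term `e_{m−1}` presupposes `1 ≤ m`.) -/
theorem td'_mul_weighted_sum_ch (m : ℕ) (hm : 0 < m) (φ : PowerSeries ℚ)
    (hφ : φ * (1 - expNeg) = PowerSeries.X) :
    AgreeAt m m
      (Td' m φ * ∑ r ∈ Finset.Icc 1 m,
        (-1 : MvPowerSeries (Fin m) ℚ) ^ r * (r : MvPowerSeries (Fin m) ℚ) * ch m r)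
      (MvPowerSeries.C (σ := Fin m) (R := ℚ) (1 / 12 : ℚ) * (esymm m 1 * esymm m (m - 1)) +
        MvPowerSeries.C (σ := Fin m) (R := ℚ) ((m : ℚ) ^ 2 / 4) * esymm m m) := by
  intro n hn
  rw [lhs_eq m φ hφ, rhs_eq m hm, esymm_top]
  rw [map_neg, map_sum, map_add, MvPowerSeries.coeff_C_mul, MvPowerSeries.coeff_C_mul,
    map_sum]
  simp only [map_sum, coeff_prod_substAt]
  have h1 : (-∑ i : Fin m, ∑ j : Fin m,
        ∏ k : Fin m, PowerSeries.coeff (R := ℚ) (n k) (AA m φ i j k))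
      = ∑ i : Fin m, ∑ j : Fin m,
          ((1/12 : ℚ) * ∏ k : Fin m, PowerSeries.coeff (R := ℚ) (n k) (BB m i j k)
            + (1/4 : ℚ) * ∏ k : Fin m, PowerSeries.coeff (R := ℚ) (n k) PowerSeries.X) := by
    rw [← Finset.sum_neg_distrib]
    apply Finset.sum_congr rfl
    intro i _
    rw [← Finset.sum_neg_distrib]
    apply Finset.sum_congr rfl
    intro j _
    exact key m hm φ hφ n hn i j
  rw [h1]
  simp only [Finset.sum_add_distrib, ← Finset.mul_sum, Finset.sum_const, Finset.card_univ,
    Fintype.card_fin, nsmul_eq_mul]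
  ring
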